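/- For any n ≥ 2 and finite alphabet Σ with |Σ| ≥ 2, the number |S_{n×n}| of configurations on Z_n × Z_n shift-symmetric with respect to at least one non-zero vector satisfies |Σ|^n·(n+1) − |Σ|·n ≤ |S_{n×n}|, with equality if and only if n is prime. -/

import Mathlib

open Function

lemma my_val_natCast {n : ℕ} [NeZero n] (a : ZMod n) : ((a.val : ℕ) : ZMod n) = a := by
  rw [ZMod.natCast_val, ZMod.cast_id]

lemma my_nsmul_inv {n : ℕ} {A : Type} (s : ZMod n × ZMod n → A) (v : ZMod n × ZMod n)
    (h : ∀ u, s u = s (u + v)) : ∀ (m : ℕ) (u), s u = s (u + m • v) := by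
  intro m
  induction m with
  | zero => simp
  | succ k ih =>
    intro u
    rw [ih u, h (u + k • v), succ_nsmul, ← add_assoc]

lemma my_prod_nsmul {p : ℕ} (m : ℕ) (a b : ZMod p) :
    m • (a, b) = ((m : ZMod p) * a, (m : ZMod p) * b) := by
  simp [Prod.smul_mk, nsmul_eq_mul]

lemma my_arith (k p c : ℕ) : k + (p + 1) * c = (k + c) * (p + 1) - k * p := by
  have hexp : (k + c) * (p + 1) = k * p + (k + (p + 1) * c) := by ring
  omega

section Prime
variable (p : ℕ) [hp : Fact p.Prime] (A : Type) [Fintype A]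

abbrev myT := A ⊕ (Option (ZMod p) × {f : ZMod p → A // ∃ x, f x ≠ f 0})

abbrev myS := {s : ZMod p × ZMod p → A // ∃ v : ZMod p × ZMod p, v ≠ 0 ∧ ∀ u, s u = s (u + v)}

noncomputable def myF : myT p A → myS p A
  | Sum.inl a => ⟨fun _ => a, ⟨(0, 1), by simp [Prod.ext_iff], fun u => rfl⟩⟩
  | Sum.inr (some i, f) =>
    ⟨fun u => f.1 (u.1 - i * u.2), ⟨(i, 1), by simp [Prod.ext_iff], fun u => by
      show f.1 (u.1 - i * u.2) = f.1 (u.1 + i - i * (u.2 + 1))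
      have h : u.1 + i - i * (u.2 + 1) = u.1 - i * u.2 := by ring
      rw [h]⟩⟩
  | Sum.inr (none, f) =>
    ⟨fun u => f.1 u.2, ⟨(1, 0), by simp [Prod.ext_iff], fun u => by
      show f.1 u.2 = f.1 (u.2 + 0); rw [add_zero]⟩⟩

lemma myF_inj : Injective (myF p A) := by
  rintro (a | ⟨_ | i, f⟩) (b | ⟨_ | j, g⟩) h <;>
    (have h' := congrArg Subtype.val h; simp only [myF] at h')
  -- inl, inl
  · exact congrArg Sum.inl (congrFun h' 0)
  -- inl, inr none
  · exfalso
    obtain ⟨x, hx⟩ := g.2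
    exact hx ((congrFun h' (0, x)).symm.trans (congrFun h' (0, 0)))
  -- inl, inr some
  · exfalso
    obtain ⟨x, hx⟩ := g.2
    have h1 := congrFun h' (x, 0)
    have h2 := congrFun h' (0, 0)
    simp only [mul_zero, sub_zero] at h1 h2
    exact hx (h1.symm.trans h2)
  -- inr none, inl
  · exfalso
    obtain ⟨x, hx⟩ := f.2
    exact hx ((congrFun h' (0, x)).trans (congrFun h' (0, 0)).symm)
  -- inr none, inr none
  · have hfg : f = g := Subtype.ext (funext fun x => congrFun h' (0, x))
    rw [hfg]
  -- inr none, inr some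
  · exfalso
    obtain ⟨x, hx⟩ := f.2
    have h1 := congrFun h' (j * x, x)
    have h2 := congrFun h' (0, 0)
    simp only [sub_self, mul_zero, sub_zero] at h1 h2
    exact hx (h1.trans h2.symm)
  -- inr some, inl
  · exfalso
    obtain ⟨x, hx⟩ := f.2
    have h1 := congrFun h' (x, 0)
    have h2 := congrFun h' (0, 0)
    simp only [mul_zero, sub_zero] at h1 h2
    exact hx (h1.trans h2.symm)
  -- inr some, inr none
  · exfalso
    obtain ⟨x, hx⟩ := f.2
    have h1 := congrFun h' (x, 0)
    have h2 := congrFun h' (0, 0)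
    simp only [mul_zero, sub_zero] at h1 h2
    exact hx (h1.trans h2.symm)
  -- inr some, inr some
  · by_cases hij : i = j
    · subst hij
      have hfg : f = g := by
        refine Subtype.ext (funext fun x => ?_)
        have h1 := congrFun h' (x, 0)
        simpa using h1
      rw [hfg]
    · exfalso
      have hij' : i - j ≠ 0 := sub_ne_zero.mpr hij
      have key : ∀ x w : ZMod p, f.1 x = g.1 w := by
        intro x w
        have h1 : (i - j) * ((i - j)⁻¹ * (w - x)) = w - x := by
          rw [← mul_assoc, mul_inv_cancel₀ hij', one_mul]
        have h2 := congrFun h' (x + i * ((i - j)⁻¹ * (w - x)), (i - j)⁻¹ * (w - x))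
        simp only at h2
        have h3 : x + i * ((i - j)⁻¹ * (w - x)) - j * ((i - j)⁻¹ * (w - x)) = w := by
          linear_combination h1
        rw [add_sub_cancel_right, h3] at h2
        exact h2
      obtain ⟨x, hx⟩ := f.2
      exact hx ((key x 0).trans (key 0 0).symm)

lemma myF_surj : Surjective (myF p A) := by
  rintro ⟨s, v, hv, hinv⟩
  by_cases hc : ∀ u, s u = s 0
  · exact ⟨Sum.inl (s 0), Subtype.ext (funext fun u => (hc u).symm)⟩
  push_neg at hc
  obtain ⟨a, b⟩ := v
  by_cases hb : b = 0
  · subst hb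
    have ha : a ≠ 0 := by simpa [Prod.ext_iff] using hv
    have key : ∀ u, s u = s (u + (1, 0)) := by
      intro u
      have := my_nsmul_inv s (a, 0) hinv (a⁻¹).val u
      rwa [my_prod_nsmul, my_val_natCast, inv_mul_cancel₀ ha, mul_zero] at this
    have key2 : ∀ x y : ZMod p, s (x, y) = s (0, y) := by
      intro x y
      have := my_nsmul_inv s (1, 0) key x.val (0, y)
      rw [Prod.mk_add_mk, my_prod_nsmul, my_val_natCast, mul_one, mul_zero,
        zero_add, add_zero] at this
      exact this.symm
    refine ⟨Sum.inr (none, ⟨fun y => s (0, y), ?_⟩), ?_⟩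
    · obtain ⟨u, hu⟩ := hc
      refine ⟨u.2, fun heq => hu ?_⟩
      have h2 : s (0, u.2) = s (0, (0 : ZMod p)) := heq
      exact (key2 u.1 u.2).trans h2
    · exact Subtype.ext (funext fun u => (key2 u.1 u.2).symm)
  · set i := a * b⁻¹ with hi
    have key : ∀ u, s u = s (u + (i, 1)) := by
      intro u
      have := my_nsmul_inv s (a, b) hinv (b⁻¹).val u
      rwa [my_prod_nsmul, my_val_natCast, inv_mul_cancel₀ hb, mul_comm b⁻¹ a] at this
    have key2 : ∀ x y : ZMod p, s (x, y) = s (x - i * y, 0) := by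
      intro x y
      have := my_nsmul_inv s (i, 1) key y.val (x - i * y, 0)
      rw [Prod.mk_add_mk, my_prod_nsmul, my_val_natCast, mul_one, zero_add] at this
      rw [this]
      have h : x - i * y + y * i = x := by ring
      rw [h]
    refine ⟨Sum.inr (some i, ⟨fun x => s (x, 0), ?_⟩), ?_⟩
    · obtain ⟨u, hu⟩ := hc
      refine ⟨u.1 - i * u.2, fun heq => hu ?_⟩
      have h2 : s (u.1 - i * u.2, 0) = s ((0 : ZMod p), (0 : ZMod p)) := heq
      exact (key2 u.1 u.2).trans h2
    · exact Subtype.ext (funext fun u => (key2 u.1 u.2).symm)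

lemma my_prime_card (hA : 2 ≤ Fintype.card A) :
    Nat.card (myS p A) = Fintype.card A ^ p * (p + 1) - Fintype.card A * p := by
  classical
  have hcard : Nat.card (myS p A) = Nat.card (myT p A) :=
    (Nat.card_eq_of_bijective _ ⟨myF_inj p A, myF_surj p A⟩).symm
  have hNC : Nat.card {f : ZMod p → A // ∃ x, f x ≠ f 0}
      = Fintype.card A ^ p - Fintype.card A := by
    rw [Nat.card_eq_fintype_card]
    have e1 : {f : ZMod p → A // ¬ ∃ x, f x ≠ f 0} ≃ A :=
      { toFun := fun g => g.1 0
        invFun := fun a => ⟨fun _ => a, by push_neg; intro x; rfl⟩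
        left_inv := fun g => Subtype.ext (funext fun x => by
          have hg := g.2; push_neg at hg; exact (hg x).symm)
        right_inv := fun a => rfl }
    have e2 : Fintype.card {f : ZMod p → A // ¬ ∃ x, f x ≠ f 0} = Fintype.card A :=
      Fintype.card_congr e1
    have hcompl := Fintype.card_subtype_compl (fun f : ZMod p → A => ¬ ∃ x, f x ≠ f 0)
    have e3 : Fintype.card {f : ZMod p → A // ¬ ¬ ∃ x, f x ≠ f 0}
        = Fintype.card {f : ZMod p → A // ∃ x, f x ≠ f 0} :=
      Fintype.card_congr (Equiv.subtypeEquivRight (fun f => not_not))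
    rw [e3, e2] at hcompl
    rw [hcompl, Fintype.card_fun, ZMod.card]
  have hT : Nat.card (myT p A) = Fintype.card A
      + (p + 1) * Nat.card {f : ZMod p → A // ∃ x, f x ≠ f 0} := by
    rw [Nat.card_sum, Nat.card_prod, Nat.card_eq_fintype_card,
      Nat.card_eq_fintype_card (α := Option (ZMod p)), Fintype.card_option, ZMod.card]
  have hkp : Fintype.card A ≤ Fintype.card A ^ p :=
    Nat.le_self_pow hp.out.ne_zero _
  rw [hcard, hT, hNC, my_arith, Nat.add_sub_cancel' hkp]

end Prime

lemma my_composite_lt (n : ℕ) (hn : 2 ≤ n) (hnp : ¬ n.Prime) (A : Type) [Fintype A]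
    (hA : 2 ≤ Fintype.card A) :
    Fintype.card A ^ n * (n + 1) - Fintype.card A * n <
      Nat.card {s : ZMod n × ZMod n → A //
        ∃ v : ZMod n × ZMod n, v ≠ 0 ∧ ∀ u, s u = s (u + v)} := by
  classical
  haveI : NeZero n := ⟨by omega⟩
  obtain ⟨m, hmdvd, hm2, hmlt⟩ := Nat.exists_dvd_of_not_prime2 hn hnp
  haveI : NeZero m := ⟨by omega⟩
  have hmne : ((m : ZMod n)) ≠ 0 := by
    rw [Ne, ZMod.natCast_eq_zero_iff]
    intro h
    exact absurd (Nat.le_of_dvd (by omega) h) (by omega)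
  set S := {s : ZMod n × ZMod n → A //
      ∃ v : ZMod n × ZMod n, v ≠ 0 ∧ ∀ u, s u = s (u + v)} with hS
  let Φ : ((ZMod m × ZMod n) → A) → S := fun f =>
    ⟨fun u => f (ZMod.castHom hmdvd (ZMod m) u.1, u.2),
     ⟨((m : ZMod n), 0), by simp [Prod.ext_iff, hmne], fun u => by
        show f _ = f _
        congr 1
        simp [Prod.ext_iff, map_add, map_natCast, ZMod.natCast_self]⟩⟩
  have hΦ : Function.Injective Φ := by
    intro f g h
    have h' := congrArg Subtype.val h
    funext zw
    obtain ⟨z, w⟩ := zw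
    have h1 := congrFun h' ((z.val : ZMod n), w)
    simpa [Φ, map_natCast, my_val_natCast] using h1
  have hle : Fintype.card A ^ (m * n) ≤ Nat.card S := by
    have := Nat.card_le_card_of_injective Φ hΦ
    rwa [Nat.card_eq_fintype_card, Fintype.card_fun, Fintype.card_prod,
      ZMod.card, ZMod.card] at this
  refine lt_of_lt_of_le ?_ hle
  have hk2 : 2 ≤ Fintype.card A := hA
  have hkpos : 0 < Fintype.card A := by omega
  have h1 : Fintype.card A ^ n * (n + 1) - Fintype.card A * n
      < Fintype.card A ^ n * (n + 1) :=
    Nat.sub_lt (by positivity) (by positivity)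
  refine lt_of_lt_of_le h1 ?_
  have h2 : n + 1 ≤ 2 ^ n := Nat.lt_two_pow_self
  have h3 : (2 : ℕ) ^ n ≤ Fintype.card A ^ n := Nat.pow_le_pow_left hA n
  calc Fintype.card A ^ n * (n + 1) ≤ Fintype.card A ^ n * Fintype.card A ^ n :=
        Nat.mul_le_mul_left _ (le_trans h2 h3)
    _ = Fintype.card A ^ (2 * n) := by rw [two_mul, pow_add]
    _ ≤ Fintype.card A ^ (m * n) :=
        Nat.pow_le_pow_right hkpos (Nat.mul_le_mul_right n hm2)

theorem stmt_18 (n : ℕ) (hn : 2 ≤ n) (A : Type) [Fintype A] (hA : 2 ≤ Fintype.card A) :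
    Fintype.card A ^ n * (n + 1) - Fintype.card A * n ≤
      Nat.card {s : ZMod n × ZMod n → A //
        ∃ v : ZMod n × ZMod n, v ≠ 0 ∧ ∀ u, s u = s (u + v)} ∧
    (Fintype.card A ^ n * (n + 1) - Fintype.card A * n =
        Nat.card {s : ZMod n × ZMod n → A //
          ∃ v : ZMod n × ZMod n, v ≠ 0 ∧ ∀ u, s u = s (u + v)} ↔ n.Prime) := by
  by_cases hp : n.Prime
  · haveI : Fact n.Prime := ⟨hp⟩
    have h := my_prime_card n A hA
    exact ⟨h.ge, ⟨fun _ => hp, fun _ => h.symm⟩⟩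
  · have h := my_composite_lt n hn hp A hA
    exact ⟨h.le, ⟨fun heq => absurd heq (ne_of_lt h), fun hpr => absurd hpr hp⟩⟩
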